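/- Every finite 2-connected graph that contains no induced subgraph isomorphic to the claw K_{1,3} and no induced subgraph isomorphic to the paw is Hamiltonian. -/

import Mathlib

open SimpleGraph

/-- The claw `K_{1,3}`: vertex `0` is the centre, adjacent to `1`, `2`, `3`. -/
def claw : SimpleGraph (Fin 4) := SimpleGraph.fromRel (fun a _ => a = 0)

/-- The paw: a triangle on `1, 2, 3` with pendant vertex `0` attached to `1`. -/
def paw : SimpleGraph (Fin 4) :=
  SimpleGraph.fromRel (fun a b => (a = 0 ∧ b = 1) ∨ (a ≠ 0 ∧ b ≠ 0))

/-- `G` is `H`-free: no induced subgraph of `G` is isomorphic to `H`.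
(`H ↪g G` is a graph embedding, i.e. an isomorphism onto an induced subgraph.) -/
def HFree {W V : Type*} (H : SimpleGraph W) (G : SimpleGraph V) : Prop :=
  ¬ Nonempty (H ↪g G)

/-- `G` is 2-connected: at least 3 vertices, connected, and deleting any vertex
leaves it connected. -/
def TwoConnected {V : Type*} (G : SimpleGraph V) : Prop :=
  (∃ a b c : V, a ≠ b ∧ a ≠ c ∧ b ≠ c) ∧ G.Connected ∧
    ∀ v : V, (G.induce {u | u ≠ v}).Connected

/-- The hypothesis that every induced paw of `G`, with pendant vertex `a₁` adjacent
precisely to the triangle vertex `a₀`, satisfies `φ(a₁,b₁)` or `φ(a₁,b₂)`: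
`a₁` has a common neighbour outside the paw with `b₁` or with `b₂`. -/
def PawCondition {V : Type*} (G : SimpleGraph V) : Prop :=
  ∀ a₁ a₀ b₁ b₂ : V,
    G.Adj a₁ a₀ → G.Adj a₀ b₁ → G.Adj a₀ b₂ → G.Adj b₁ b₂ →
    ¬ G.Adj a₁ b₁ → ¬ G.Adj a₁ b₂ → a₁ ≠ b₁ → a₁ ≠ b₂ →
    ∃ x, x ∉ ({a₁, a₀, b₁, b₂} : Set V) ∧ G.Adj x a₁ ∧ (G.Adj x b₁ ∨ G.Adj x b₂)

/-- A ray (one-way infinite path) in `G`, given by its sequence of vertices. -/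
def IsRay {V : Type*} (G : SimpleGraph V) (f : ℕ → V) : Prop :=
  Function.Injective f ∧ ∀ n, G.Adj (f n) (f (n + 1))

/-- Two rays are equivalent (belong to the same end) if no finite vertex set
separates them. -/
def EndEquiv {V : Type*} (G : SimpleGraph V) (f g : ℕ → V) : Prop :=
  ∀ S : Set V, S.Finite →
    ∃ (m n : ℕ) (p : G.Walk (f m) (g n)), ∀ x ∈ p.support, x ∉ S

/-- The ends of `G`, as equivalence classes of rays. -/
def Ends {V : Type*} (G : SimpleGraph V) : Type _ :=
  Quot (fun f g : {f : ℕ → V // IsRay G f} => EndEquiv G f.1 g.1)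

/-- The edge cut `δ(X)`. -/
def edgeCut {V : Type*} (G : SimpleGraph V) (X : Set V) : Set (Sym2 V) :=
  {e | e ∈ G.edgeSet ∧ ∃ a b, e = s(a, b) ∧ a ∈ X ∧ b ∉ X}

/-- `G` has a Hamilton circle in its Freudenthal compactification `|G|`,
expressed combinatorially: there is a spanning edge set `C` in which every
vertex has degree exactly `2` and which meets every finite cut of `G` in a
positive even number of edges (for locally finite connected `G` this
characterises edge sets whose closure in `|G|` is a circle through all
vertices). -/
def HasHamiltonCircle {V : Type*} (G : SimpleGraph V) : Prop :=
  ∃ C ⊆ G.edgeSet, (∀ v : V, {e ∈ C | v ∈ e}.ncard = 2) ∧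
    ∀ X : Set V, X.Nonempty → Xᶜ.Nonempty → (edgeCut G X).Finite →
      (C ∩ edgeCut G X).Nonempty ∧ Even ((C ∩ edgeCut G X).ncard)

/-- The end represented by the ray `g` lies in the closure (in `|G|`) of the
vertex set `M`: for every finite `S`, the component of `G - S` containing a
tail of `g` meets `M`. -/
def EndInClosure {V : Type*} (G : SimpleGraph V) (g : ℕ → V) (M : Set V) : Prop :=
  ∀ S : Set V, S.Finite → ∃ u ∈ M, ∃ N : ℕ, ∀ n ≥ N,
    ∃ p : G.Walk u (g n), ∀ x ∈ p.support, x ∉ S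

/-- `S` is a vertex separator of `G`: `G - S` is disconnected. -/
def IsSeparator {V : Type*} (G : SimpleGraph V) (S : Set V) : Prop :=
  ∃ (u : V) (hu : u ∉ S) (v : V) (hv : v ∉ S),
    ¬ (G.induce {x | x ∉ S}).Reachable ⟨u, hu⟩ ⟨v, hv⟩

/-- `S` is a minimal vertex separator of `G`. -/
def IsMinSeparator {V : Type*} (G : SimpleGraph V) (S : Set V) : Prop :=
  IsSeparator G S ∧ ∀ T ⊂ S, ¬ IsSeparator G T

/-- The `k`-blow-up of `G`: each vertex is replaced by a `k`-clique. -/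
def blowup {V : Type*} (G : SimpleGraph V) (k : ℕ) : SimpleGraph (V × Fin k) where
  Adj x y := (x.1 = y.1 ∧ x.2 ≠ y.2) ∨ G.Adj x.1 y.1
  symm := by
    constructor
    rintro x y (⟨h1, h2⟩ | h)
    · exact Or.inl ⟨h1.symm, h2.symm⟩
    · exact Or.inr h.symm
  loopless := by
    constructor
    rintro x (⟨_, h⟩ | h)
    · exact h rfl
    · exact G.irrefl h

section Helpers

open SimpleGraph Walk

variable {V : Type} {G : SimpleGraph V}

/-- A path from a vertex to itself is nil. -/
lemma path_loop_nil {x : V} {p : G.Walk x x} (hp : p.IsPath) : p.Nil := by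
  cases p with
  | nil => exact Walk.Nil.nil
  | cons h q =>
    exfalso
    have h1 := hp.support_nodup
    rw [Walk.support_cons] at h1
    exact (List.nodup_cons.mp h1).1 q.end_mem_support

/-- The reverse of a cycle is a cycle. -/
lemma isCycle_reverse {u : V} {c : G.Walk u u} (hc : c.IsCycle) : c.reverse.IsCycle := by
  obtain ⟨⟨ht, hne⟩, hnd⟩ := hc
  refine ⟨⟨Walk.IsTrail.reverse _ ht, ?_⟩, ?_⟩
  · intro hrev
    apply hne
    have := congrArg Walk.reverse hrev
    simpa using this
  · have hnn : ¬ c.Nil := fun h => hne h.eq_nil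
    have ht_ne : c.support.tail ≠ [] := by
      intro h
      have h1 := c.length_support
      have h2 := congrArg List.length h
      rw [List.length_tail] at h2
      simp only [List.length_nil] at h2
      exact hnn (Walk.nil_iff_length_eq.mpr (by omega))
    rcases c.support.tail.eq_nil_or_concat with h | ⟨s, b, hs⟩
    · exact absurd h ht_ne
    rw [List.concat_eq_append] at hs
    have hb : b = u := by
      have h4 : c.support.getLast? = some u := by
        rw [List.getLast?_eq_getLast_of_ne_nil (by simp)]
        simp [c.getLast_support]
      have h3 : c.support.getLast? = some b := by
        rw [Walk.support_eq_cons c, hs, ← List.cons_append, List.getLast?_concat]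
      rw [h3] at h4
      exact Option.some_inj.mp h4
    rw [hb] at hs
    rw [Walk.support_reverse, Walk.support_eq_cons c, hs]
    rw [hs] at hnd
    have hrw : (u :: (s ++ [u])).reverse = u :: (s.reverse ++ [u]) := by simp
    rw [hrw, List.tail_cons, List.nodup_append_comm]
    rw [List.nodup_append_comm] at hnd
    simp only [List.singleton_append, List.nodup_cons, List.mem_reverse,
      List.nodup_reverse] at hnd ⊢
    exact hnd

/-- Key lemma: if `c = cons h q` is a maximum-length cycle based at `u` with
successor `x`, and `w` is outside the cycle and adjacent to `u`, then `w` is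
not adjacent to `x`. -/
lemma no_adj_succ {u x w : V} (h : G.Adj u x) (q : G.Walk x u)
    (hc : (Walk.cons h q).IsCycle)
    (hmax : ∀ (v' : V) (c' : G.Walk v' v'), c'.IsCycle → c'.length ≤ (Walk.cons h q).length)
    (hw : w ∉ (Walk.cons h q).support) (hadj : G.Adj w u) : ¬ G.Adj w x := by
  intro hwx
  obtain ⟨hq, _⟩ := (Walk.cons_isCycle_iff q h).mp hc
  have hwq : w ∉ q.support := fun hmem => hw (by simp [Walk.support_cons, hmem])
  have hc2 : (Walk.cons hadj.symm (Walk.cons hwx q)).IsCycle := by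
    rw [Walk.cons_isCycle_iff]
    constructor
    · rw [Walk.cons_isPath_iff]; exact ⟨hq, hwq⟩
    · simp only [Walk.edges_cons, List.mem_cons]
      rintro (heq | hmem)
      · rw [Sym2.eq_iff] at heq
        rcases heq with ⟨h1, _⟩ | ⟨h1, _⟩
        · exact G.irrefl (h1 ▸ hadj)
        · exact h.ne h1
      · exact hwq (q.snd_mem_support_of_mem_edges hmem)
  have hle := hmax u _ hc2
  simp only [Walk.length_cons] at hle
  omega

/-- A walk from outside `P` to inside `P` crosses an edge. -/
lemma exists_cross {P : V → Prop} :
    ∀ {a b : V}, G.Walk a b → ¬ P a → P b →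
      ∃ x y, G.Adj x y ∧ ¬ P x ∧ P y := by
  intro a b p
  induction p with
  | nil => intro h1 h2; exact absurd h2 h1
  | @cons a m b h q ih =>
    intro h1 h2
    by_cases hm : P m
    · exact ⟨a, m, h, h1, hm⟩
    · exact ih hm h2

lemma claw_elim (hclaw : HFree claw G) {u a b c : V}
    (hua : G.Adj u a) (hub : G.Adj u b) (huc : G.Adj u c)
    (hab : ¬ G.Adj a b) (hac : ¬ G.Adj a c) (hbc : ¬ G.Adj b c)
    (nab : a ≠ b) (nac : a ≠ c) (nbc : b ≠ c) : False := by
  apply hclaw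
  have nua : u ≠ a := hua.ne
  have nub : u ≠ b := hub.ne
  have nuc : u ≠ c := huc.ne
  have hau : G.Adj a u := hua.symm
  have hbu : G.Adj b u := hub.symm
  have hcu : G.Adj c u := huc.symm
  have hba : ¬ G.Adj b a := fun h => hab h.symm
  have hca : ¬ G.Adj c a := fun h => hac h.symm
  have hcb : ¬ G.Adj c b := fun h => hbc h.symm
  refine ⟨⟨⟨![u, a, b, c], ?_⟩, ?_⟩⟩
  · intro i j hij
    fin_cases i <;> fin_cases j <;> simp_all
  · intro i j
    show G.Adj (![u, a, b, c] i) (![u, a, b, c] j) ↔ _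
    fin_cases i <;> fin_cases j <;>
      simp_all [claw, SimpleGraph.fromRel_adj, G.irrefl]

lemma paw_elim (hpaw : HFree paw G) {w u x y : V}
    (hwu : G.Adj w u) (hux : G.Adj u x) (huy : G.Adj u y) (hxy : G.Adj x y)
    (hwx : ¬ G.Adj w x) (hwy : ¬ G.Adj w y)
    (nwx : w ≠ x) (nwy : w ≠ y) : False := by
  apply hpaw
  have nwu : w ≠ u := hwu.ne
  have nux : u ≠ x := hux.ne
  have nuy : u ≠ y := huy.ne
  have nxy : x ≠ y := hxy.ne
  have huw : G.Adj u w := hwu.symm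
  have hxu : G.Adj x u := hux.symm
  have hyu : G.Adj y u := huy.symm
  have hyx : G.Adj y x := hxy.symm
  have hxw : ¬ G.Adj x w := fun h => hwx h.symm
  have hyw : ¬ G.Adj y w := fun h => hwy h.symm
  refine ⟨⟨⟨![w, u, x, y], ?_⟩, ?_⟩⟩
  · intro i j hij
    fin_cases i <;> fin_cases j <;> simp_all
  · intro i j
    show G.Adj (![w, u, x, y] i) (![w, u, x, y] j) ↔ _
    fin_cases i <;> fin_cases j <;>
      simp_all [paw, SimpleGraph.fromRel_adj, G.irrefl]

end Helpers

/-- Every finite 2-connected claw-free and paw-free graph is Hamiltonian. -/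
theorem stmt_0 {V : Type} [Fintype V] [DecidableEq V] (G : SimpleGraph V)
    (h2 : TwoConnected G) (hclaw : HFree claw G) (hpaw : HFree paw G) :
    G.IsHamiltonian := by
  classical
  obtain ⟨⟨a0, b0, c0, hab0, hac0, hbc0⟩, hconn, hdel⟩ := h2
  -- first neighbour `a` of `a0`
  obtain ⟨w1⟩ := hconn.preconnected a0 b0
  obtain ⟨a, h_ua, q1, -⟩ := Walk.not_nil_iff.mp (Walk.not_nil_of_ne (p := w1) hab0)
  have hu_ne_a : a0 ≠ a := h_ua.ne
  -- a vertex different from both `a` and `a0`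
  obtain ⟨z, hz_ne_a, hz_ne_u⟩ : ∃ z, z ≠ a ∧ z ≠ a0 := by
    by_cases hb : b0 = a
    · exact ⟨c0, by rw [← hb]; exact fun h => hbc0 h.symm, fun h => hac0 h.symm⟩
    · exact ⟨b0, hb, fun h => hab0 h.symm⟩
  -- second neighbour `b ≠ a` of `a0`, found in `G - a`
  obtain ⟨w2⟩ := (hdel a).preconnected ⟨a0, hu_ne_a⟩ ⟨z, hz_ne_a⟩
  have hne2 : (⟨a0, hu_ne_a⟩ : {x | x ≠ a}) ≠ ⟨z, hz_ne_a⟩ := by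
    intro h
    exact hz_ne_u (congrArg Subtype.val h).symm
  obtain ⟨bs, h_ub', q2, -⟩ := Walk.not_nil_iff.mp (Walk.not_nil_of_ne (p := w2) hne2)
  have h_ub : G.Adj a0 bs.val := h_ub'
  have hb_ne_a : bs.val ≠ a := bs.prop
  -- path from `a` to `b` avoiding `a0`
  obtain ⟨w3⟩ := (hdel a0).preconnected ⟨a, h_ua.ne'⟩ ⟨bs.val, h_ub.ne'⟩
  let f : G.induce {x | x ≠ a0} →g G := ⟨Subtype.val, fun h => h⟩
  let p : G.Walk a bs.val :=
    (w3.toPath : (G.induce {x | x ≠ a0}).Walk ⟨a, h_ua.ne'⟩ ⟨bs.val, h_ub.ne'⟩).map f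
  have hp_path : p.IsPath :=
    Walk.map_isPath_of_injective Subtype.val_injective w3.toPath.2
  have hu_not : a0 ∉ p.support := by
    intro hmem
    rw [Walk.support_map] at hmem
    obtain ⟨s, _, hs⟩ := List.mem_map.mp hmem
    exact s.prop hs
  -- the initial cycle
  have hcyc : (Walk.cons h_ua (p.concat h_ub.symm)).IsCycle := by
    rw [Walk.cons_isCycle_iff]
    constructor
    · rw [← Walk.isPath_reverse_iff, Walk.reverse_concat, Walk.cons_isPath_iff]
      refine ⟨hp_path.reverse, ?_⟩
      rw [Walk.support_reverse, List.mem_reverse]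
      exact hu_not
    · rw [Walk.edges_concat, List.concat_eq_append]
      simp only [List.mem_append, List.mem_singleton]
      rintro (hmem | heq)
      · exact hu_not (p.fst_mem_support_of_mem_edges hmem)
      · rw [Sym2.eq_iff] at heq
        rcases heq with ⟨h1, h2⟩ | ⟨_, h2⟩
        · exact h_ua.ne' h2
        · exact hb_ne_a (h2 ▸ rfl)
  -- maximal cycle
  set P : ℕ → Prop := fun n => ∃ (v : V) (c : G.Walk v v), c.IsCycle ∧ c.length = n with hP
  have hbound : ∀ n, P n → n ≤ Fintype.card V := by
    rintro n ⟨v, c, hc, rfl⟩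
    have h1 := hc.support_nodup.length_le_card
    have h2 := c.length_support
    rw [List.length_tail] at h1
    omega
  have hP0 : P (Walk.cons h_ua (p.concat h_ub.symm)).length := ⟨a0, _, hcyc, rfl⟩
  have hPL : P (Nat.findGreatest P (Fintype.card V)) :=
    Nat.findGreatest_spec (hbound _ hP0) hP0
  obtain ⟨v, c, hc, hlen⟩ := hPL
  have hmax : ∀ (v' : V) (c' : G.Walk v' v'), c'.IsCycle → c'.length ≤ c.length := by
    intro v' c' hc'
    by_contra hgt
    push_neg at hgt
    exact Nat.findGreatest_is_greatest (P := P) (by omega)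
      (hbound _ ⟨v', c', hc', rfl⟩) ⟨v', c', hc', rfl⟩
  -- the maximal cycle is spanning
  have hall : ∀ x, x ∈ c.support := by
    by_contra hnot
    push_neg at hnot
    obtain ⟨w, hw⟩ := hnot
    obtain ⟨pw⟩ := hconn.preconnected w v
    obtain ⟨w', u', hadj, hw', hu'⟩ :=
      exists_cross (P := fun z => z ∈ c.support) pw hw c.start_mem_support
    -- rotate `c` to be based at `u'`
    have hc1 : (c.rotate u' hu').IsCycle := hc.rotate hu'
    have hlen1 : (c.rotate u' hu').length = c.length := by
      have h1 := (c.rotate_edges u' hu').perm.length_eq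
      rwa [Walk.length_edges, Walk.length_edges] at h1
    have hw1 : w' ∉ (c.rotate u' hu').support := by
      intro hmem
      rw [Walk.support_eq_cons] at hmem
      rcases List.mem_cons.mp hmem with rfl | hmem'
      · exact hw' hu'
      · exact hw' (List.mem_of_mem_tail ((c.support_rotate u' hu').mem_iff.mp hmem'))
    -- decompose the rotated cycle
    obtain ⟨x, hux, q, hq_eq⟩ := Walk.not_nil_iff.mp hc1.not_nil
    rw [hq_eq] at hc1 hlen1 hw1
    have hmax1 : ∀ (v'' : V) (c'' : G.Walk v'' v''), c''.IsCycle →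
        c''.length ≤ (Walk.cons hux q).length := by
      intro v'' c'' h''
      rw [hlen1]; exact hmax _ _ h''
    have hnwx : ¬ G.Adj w' x := no_adj_succ hux q hc1 hmax1 hw1 hadj
    -- decompose the reversed cycle to find the predecessor
    have hqpath : q.IsPath := ((Walk.cons_isCycle_iff q hux).mp hc1).1
    have h3 := hc1.three_le_length
    rw [Walk.length_cons] at h3
    have hqr : ¬ q.reverse.Nil := by
      rw [Walk.nil_iff_length_eq, Walk.length_reverse]
      omega
    obtain ⟨y, huy, r, hr_eq⟩ := Walk.not_nil_iff.mp hqr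
    have hrpath : r.IsPath ∧ u' ∉ r.support := by
      have h4 := hqpath.reverse
      rw [hr_eq] at h4
      exact (Walk.cons_isPath_iff _ _).mp h4
    have hc1rev_eq : (Walk.cons hux q).reverse =
        Walk.cons huy (r.append (Walk.cons hux.symm Walk.nil)) := by
      rw [Walk.reverse_cons, hr_eq, Walk.cons_append]
    have hc1rev : (Walk.cons huy (r.append (Walk.cons hux.symm Walk.nil))).IsCycle := by
      rw [← hc1rev_eq]; exact isCycle_reverse hc1
    have hw1rev : w' ∉ (Walk.cons huy (r.append (Walk.cons hux.symm Walk.nil))).support := by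
      rw [← hc1rev_eq, Walk.support_reverse, List.mem_reverse]
      exact hw1
    have hmax2 : ∀ (v'' : V) (c'' : G.Walk v'' v''), c''.IsCycle →
        c''.length ≤ (Walk.cons huy (r.append (Walk.cons hux.symm Walk.nil))).length := by
      intro v'' c'' h''
      rw [← hc1rev_eq, Walk.length_reverse, hlen1]
      exact hmax _ _ h''
    have hnwy : ¬ G.Adj w' y := no_adj_succ huy _ hc1rev hmax2 hw1rev hadj
    -- `x ≠ y`
    have hxy_ne : x ≠ y := by
      rintro rfl
      have hrnil : r.Nil := path_loop_nil hrpath.1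
      have hrl : r.length = 0 := Walk.nil_iff_length_eq.mp hrnil
      have h5 : q.reverse.length = r.length + 1 := by rw [hr_eq]; simp
      rw [Walk.length_reverse] at h5
      omega
    -- `w'` is outside the cycle, `x, y` are on it
    have hxmem : x ∈ (Walk.cons hux q).support := by
      rw [Walk.support_cons]
      exact List.mem_cons_of_mem _ q.start_mem_support
    have hymem : y ∈ (Walk.cons hux q).support := by
      rw [Walk.support_cons]
      apply List.mem_cons_of_mem
      have : y ∈ q.reverse.support := by
        rw [hr_eq, Walk.support_cons]
        exact List.mem_cons_of_mem _ r.start_mem_support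
      rwa [Walk.support_reverse, List.mem_reverse] at this
    have hw'x : w' ≠ x := fun h => hw1 (h ▸ hxmem)
    have hw'y : w' ≠ y := fun h => hw1 (h ▸ hymem)
    by_cases hxy : G.Adj x y
    · exact paw_elim hpaw hadj hux huy hxy hnwx hnwy hw'x hw'y
    · exact claw_elim hclaw hadj.symm hux huy hnwx hnwy hxy hw'x hw'y hxy_ne
  -- conclude
  intro _
  refine ⟨v, c, ?_⟩
  rw [Walk.isHamiltonianCycle_iff_isCycle_and_support_count_tail_eq_one]
  refine ⟨hc, fun a' => ?_⟩
  apply List.count_eq_one_of_mem hc.support_nodup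
  have htail : c.support.tail = c.tail.support := (c.support_tail_of_not_nil hc.not_nil).symm
  have hmem := hall a'
  rw [Walk.support_eq_cons] at hmem
  rcases List.mem_cons.mp hmem with rfl | hmem'
  · rw [htail]
    exact c.tail.end_mem_support
  · exact hmem'
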